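/- Let p, K, K̃ be positive integers with K < p and K̃ < p, and let μ, μ̃ ∈ ℝ. Let g₁,…,g_K and g̃₁,…,g̃_{K̃} be continuous functions ℝ → ℝ and let γ₁,…,γ_K and γ̃₁,…,γ̃_{K̃} be unit vectors in ℝ^p, such that ({g_k}, Γ) and ({g̃_l}, Γ̃) each satisfy Condition 1. If for every symmetric matrix M ∈ ℝ^{p×p} one has μ + g₁(γ₁ᵀMγ₁) + ⋯ + g_K(γ_KᵀMγ_K) = μ̃ + g̃₁(γ̃₁ᵀMγ̃₁) + ⋯ + g̃_{K̃}(γ̃_{K̃}ᵀMγ̃_{K̃}), then: (a) μ = μ̃; (b) K = K̃; and (c) there exist a permutation π of {1,…,K} and signs ε_j ∈ {−1, 1} such that γ_j = ε_j γ̃_{π(j)} and g_j = g̃_{π(j)} for every j ∈ {1,…,K}. -/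

import Mathlib

open Matrix

section Helpers

variable {p : ℕ}

noncomputable def symOuter {p : ℕ} (x y : Fin p → ℝ) : Matrix (Fin p) (Fin p) ℝ :=
  Matrix.of fun i j => (x i * y j + y i * x j) / 2

lemma symOuter_isSymm (x y : Fin p → ℝ) : (symOuter x y).IsSymm := by
  unfold Matrix.IsSymm
  ext i j
  simp only [symOuter, Matrix.transpose_apply, Matrix.of_apply]
  ring

lemma quad_vecMulVec (v x y : Fin p → ℝ) :
    v ⬝ᵥ (Matrix.vecMulVec x y).mulVec v = (v ⬝ᵥ x) * (v ⬝ᵥ y) := by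
  simp only [dotProduct, Matrix.mulVec, Matrix.vecMulVec_apply, dotProduct]
  have h : ∀ i : Fin p, (v i * ∑ j, x i * y j * v j)
      = (v i * x i) * (∑ j, v j * y j) := by
    intro i
    rw [Finset.mul_sum, Finset.mul_sum]
    apply Finset.sum_congr rfl
    intros; ring
  rw [Finset.sum_congr rfl fun i _ => h i, ← Finset.sum_mul]

lemma quad_add (v : Fin p → ℝ) (M N : Matrix (Fin p) (Fin p) ℝ) :
    v ⬝ᵥ (M + N).mulVec v = v ⬝ᵥ M.mulVec v + v ⬝ᵥ N.mulVec v := by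
  rw [Matrix.add_mulVec, dotProduct_add]

lemma quad_smul (v : Fin p → ℝ) (c : ℝ) (M : Matrix (Fin p) (Fin p) ℝ) :
    v ⬝ᵥ (c • M).mulVec v = c * (v ⬝ᵥ M.mulVec v) := by
  rw [Matrix.smul_mulVec, dotProduct_smul, smul_eq_mul]

lemma symOuter_eq (x y : Fin p → ℝ) :
    symOuter x y = (1/2 : ℝ) • (Matrix.vecMulVec x y + Matrix.vecMulVec y x) := by
  ext i j
  simp only [symOuter, Matrix.of_apply, Matrix.smul_apply, Matrix.add_apply,
    Matrix.vecMulVec_apply, smul_eq_mul]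
  ring

lemma quad_symOuter (v x y : Fin p → ℝ) :
    v ⬝ᵥ (symOuter x y).mulVec v = (v ⬝ᵥ x) * (v ⬝ᵥ y) := by
  rw [symOuter_eq, quad_smul, quad_add, quad_vecMulVec, quad_vecMulVec,
    dotProduct_comm v y]
  ring

end Helpers

variable {p n : ℕ}

lemma exists_dual_family (v : Fin n → Fin p → ℝ)
    (h : (Matrix.of fun (i : Fin p) (k : Fin n) => v k i).rank = n) :
    ∃ y : Fin n → Fin p → ℝ, ∀ k j, v k ⬝ᵥ y j = if k = j then 1 else 0 := by
  set A : Matrix (Fin p) (Fin n) ℝ := Matrix.of fun i k => v k i with hA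
  have hG : (Aᵀ * A).rank = n := by rw [Matrix.rank_transpose_mul_self, h]
  have hsurj : LinearMap.range (Aᵀ * A).mulVecLin = ⊤ := by
    apply Submodule.eq_top_of_finrank_eq
    rw [← Matrix.rank]  -- rank def
    rw [hG, Module.finrank_fintype_fun_eq_card, Fintype.card_fin]
  have hz : ∀ j : Fin n, ∃ z : Fin n → ℝ, (Aᵀ * A).mulVec z = Pi.single j 1 := by
    intro j
    have : (Pi.single j 1 : Fin n → ℝ) ∈ LinearMap.range (Aᵀ * A).mulVecLin := by
      rw [hsurj]; trivial
    obtain ⟨z, hz⟩ := this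
    exact ⟨z, hz⟩
  choose z hz using hz
  refine ⟨fun j => A.mulVec (z j), fun k j => ?_⟩
  have h1 : v k ⬝ᵥ A.mulVec (z j) = (Aᵀ.mulVec (A.mulVec (z j))) k := by
    simp only [Matrix.mulVec, dotProduct, Matrix.transpose_apply, hA, Matrix.of_apply]
  rw [h1, Matrix.mulVec_mulVec, hz j]
  by_cases hkj : k = j <;> simp [hkj, Pi.single_apply]

variable {p : ℕ}

lemma linear_of_additive (g : ℝ → ℝ) (hc : Continuous g)
    (hadd : ∀ a b, g (a + b) = g a + g b) : ∃ a : ℝ, ∀ u, g u = a * u := by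
  let f : ℝ →+ ℝ := AddMonoidHom.mk' g hadd
  have hf : Continuous f := hc
  let L := f.toRealLinearMap hf
  refine ⟨g 1, fun u => ?_⟩
  have hL : ∀ t, L t = g t := fun t => congrFun (f.coe_toRealLinearMap hf) t
  rw [← hL u]
  have : L u = u • L 1 := by rw [← L.map_smul, smul_eq_mul, mul_one]
  rw [this, hL 1, smul_eq_mul, mul_comm]

lemma exists_orth (S : Set (Fin p → ℝ)) (v : Fin p → ℝ)
    (hv : v ∉ Submodule.span ℝ S) :
    ∃ x : Fin p → ℝ, (∀ w ∈ S, w ⬝ᵥ x = 0) ∧ v ⬝ᵥ x = 1 := by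
  classical
  let E := EuclideanSpace ℝ (Fin p)
  let toE : (Fin p → ℝ) → E := fun a => WithLp.toLp 2 a
  let S' : Set E := toE '' S
  let v' : E := toE v
  have hdot : ∀ a b : Fin p → ℝ, a ⬝ᵥ b = inner ℝ (toE a) (toE b) := by
    intro a b
    show _ = inner ℝ (WithLp.toLp 2 a : EuclideanSpace ℝ (Fin p)) (WithLp.toLp 2 b)
    simp [PiLp.inner_apply, dotProduct, mul_comm]
  let W : Submodule ℝ E := Submodule.span ℝ S'
  have hvW : v' ∉ W := by
    intro hmem
    apply hv
    let e : E ≃ₗ[ℝ] (Fin p → ℝ) := WithLp.linearEquiv 2 ℝ (Fin p → ℝ)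
    have h1 : e v' ∈ Submodule.map (e : E →ₗ[ℝ] (Fin p → ℝ)) W := Submodule.mem_map_of_mem hmem
    rw [Submodule.map_span] at h1
    have h2 : (e : E →ₗ[ℝ] (Fin p → ℝ)) '' S' = S := by
      ext w; constructor
      · rintro ⟨u, ⟨u0, hu0, rfl⟩, rfl⟩; exact hu0
      · intro hw; exact ⟨toE w, ⟨w, hw, rfl⟩, rfl⟩
    rw [h2] at h1
    exact h1
  haveI : CompleteSpace W := FiniteDimensional.complete ℝ W
  set x0 : E := v' - (Submodule.orthogonalProjection W v' : E) with hx0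
  have hx0W : x0 ∈ Wᗮ := W.sub_starProjection_mem_orthogonal v'
  have hx0ne : x0 ≠ 0 := by
    intro hz
    apply hvW
    have hv' : v' = (Submodule.orthogonalProjection W v' : E) := sub_eq_zero.mp hz
    rw [hv']; exact (Submodule.orthogonalProjection W v').2
  have hvx0 : inner ℝ v' x0 = (‖x0‖ : ℝ)^2 := by
    have hsplit : v' = x0 + (Submodule.orthogonalProjection W v' : E) := by rw [hx0]; abel
    rw [hsplit, inner_add_left]
    have h2 : inner ℝ ((Submodule.orthogonalProjection W v' : E)) x0 = (0:ℝ) :=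
      hx0W (Submodule.orthogonalProjection W v') (Submodule.orthogonalProjection W v').2
    rw [h2, real_inner_self_eq_norm_sq]
    ring
  have hnz : (‖x0‖ : ℝ)^2 ≠ 0 := by
    exact pow_ne_zero 2 (norm_ne_zero_iff.mpr hx0ne)
  refine ⟨(‖x0‖^2)⁻¹ • WithLp.ofLp x0, fun w hw => ?_, ?_⟩
  · rw [hdot]
    have hwW : toE w ∈ W := Submodule.subset_span ⟨w, hw, rfl⟩
    have hz := hx0W (toE w) hwW
    have : inner ℝ (toE w) ((toE ((‖x0‖^2)⁻¹ • WithLp.ofLp x0))) = ((‖x0‖^2)⁻¹ : ℝ) * inner ℝ (toE w) x0 := by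
      exact inner_smul_right _ _ _
    rw [this, hz, mul_zero]
  · rw [hdot]
    have : inner ℝ (toE v) ((toE ((‖x0‖^2)⁻¹ • WithLp.ofLp x0))) = ((‖x0‖^2)⁻¹ : ℝ) * inner ℝ v' x0 :=
      inner_smul_right _ _ _
    rw [this, hvx0]
    field_simp
    exact div_self (norm_ne_zero_iff.mpr hx0ne)

section Tools

variable {p : ℕ}

lemma sum_cancel_one {ι : Type*} [Fintype ι] [DecidableEq ι] (f h : ι → ℝ) (k0 : ι)
    (hfh : ∀ k, k ≠ k0 → f k = h k) (hsum : ∑ k, f k = ∑ k, h k) : f k0 = h k0 := by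
  have h1 : ∑ k ∈ Finset.univ.erase k0, f k = ∑ k ∈ Finset.univ.erase k0, h k :=
    Finset.sum_congr rfl fun k hk => hfh k (Finset.ne_of_mem_erase hk)
  have h2 := Finset.add_sum_erase Finset.univ f (Finset.mem_univ k0)
  have h3 := Finset.add_sum_erase Finset.univ h (Finset.mem_univ k0)
  linarith

lemma sum_cancel_two {ι κ : Type*} [Fintype ι] [DecidableEq ι] [Fintype κ] [DecidableEq κ]
    (f h : ι → ℝ) (u w : κ → ℝ) (k0 : ι) (l0 : κ)
    (hfh : ∀ k, k ≠ k0 → f k = h k) (huw : ∀ l, l ≠ l0 → u l = w l)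
    (h1 : ∑ k, f k = ∑ l, u l) (h2 : ∑ k, h k = ∑ l, w l) :
    f k0 - h k0 = u l0 - w l0 := by
  have e1 : ∑ k ∈ Finset.univ.erase k0, f k = ∑ k ∈ Finset.univ.erase k0, h k :=
    Finset.sum_congr rfl fun k hk => hfh k (Finset.ne_of_mem_erase hk)
  have e2 : ∑ l ∈ Finset.univ.erase l0, u l = ∑ l ∈ Finset.univ.erase l0, w l :=
    Finset.sum_congr rfl fun l hl => huw l (Finset.ne_of_mem_erase hl)
  have a1 := Finset.add_sum_erase Finset.univ f (Finset.mem_univ k0)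
  have a2 := Finset.add_sum_erase Finset.univ h (Finset.mem_univ k0)
  have a3 := Finset.add_sum_erase Finset.univ u (Finset.mem_univ l0)
  have a4 := Finset.add_sum_erase Finset.univ w (Finset.mem_univ l0)
  linarith

lemma not_mem_span_single {v w : Fin p → ℝ} (hv : v ⬝ᵥ v = 1) (hw1 : w ⬝ᵥ w = 1)
    (hne : ∀ ε : ℝ, (ε = 1 ∨ ε = -1) → v ≠ ε • w) :
    v ∉ Submodule.span ℝ ({w} : Set (Fin p → ℝ)) := by
  intro hmem
  rw [Submodule.mem_span_singleton] at hmem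
  obtain ⟨c, hc⟩ := hmem
  have hcc : c * c = 1 := by
    have h1 : (c • w) ⬝ᵥ (c • w) = 1 := by rw [hc, hv]
    rw [smul_dotProduct, dotProduct_smul, smul_eq_mul, smul_eq_mul, hw1] at h1
    linarith
  have : c = 1 ∨ c = -1 := mul_self_eq_one_iff.mp hcc
  exact hne c this hc.symm

end Tools

section Tools2

variable {p : ℕ}

lemma pairSurj {v w : Fin p → ℝ} (hv : v ⬝ᵥ v = 1) (hw : w ⬝ᵥ w = 1)
    (hne : ∀ ε : ℝ, (ε = 1 ∨ ε = -1) → v ≠ ε • w) (a b : ℝ) :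
    ∃ M : Matrix (Fin p) (Fin p) ℝ, M.IsSymm ∧ v ⬝ᵥ M.mulVec v = a ∧ w ⬝ᵥ M.mulVec w = b := by
  have hne' : ∀ ε : ℝ, (ε = 1 ∨ ε = -1) → w ≠ ε • v := by
    intro ε hε hwe
    apply hne ε hε
    rcases hε with h1 | h1
    · rw [hwe, h1]; simp
    · rw [hwe, h1]; funext i; simp
  obtain ⟨z, hz0, hz1⟩ := exists_orth {w} v (not_mem_span_single hv hw hne)
  obtain ⟨z', hz'0, hz'1⟩ := exists_orth {v} w (not_mem_span_single hw hv hne')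
  refine ⟨a • symOuter z v + b • symOuter z' w, ?_, ?_, ?_⟩
  · exact ((symOuter_isSymm z v).smul a).add ((symOuter_isSymm z' w).smul b)
  · rw [quad_add, quad_smul, quad_smul, quad_symOuter, quad_symOuter]
    rw [hz1, hz'0 v (Set.mem_singleton v), hv]
    ring
  · rw [quad_add, quad_smul, quad_smul, quad_symOuter, quad_symOuter]
    rw [hz0 w (Set.mem_singleton w), hz'1, hw]
    ring

lemma entries_of_quad_eq {a b : ℝ} {v w : Fin p → ℝ}
    (h : ∀ M : Matrix (Fin p) (Fin p) ℝ, M.IsSymm →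
      a * (v ⬝ᵥ M.mulVec v) = b * (w ⬝ᵥ M.mulVec w)) :
    ∀ i j, a * (v i * v j) = b * (w i * w j) := by
  intro i j
  have := h (symOuter (Pi.single i 1) (Pi.single j 1)) (symOuter_isSymm _ _)
  rw [quad_symOuter, quad_symOuter, dotProduct_single, dotProduct_single,
    dotProduct_single, dotProduct_single] at this
  simpa using this

lemma eq_pm_of_outer_eq {v w : Fin p → ℝ} (hv : ∑ i, v i ^ 2 = 1)
    (h : ∀ i j, v i * v j = w i * w j) : ∃ ε : ℝ, (ε = 1 ∨ ε = -1) ∧ v = ε • w := by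
  have hvz : ∃ i0, v i0 ≠ 0 := by
    by_contra hcon
    push_neg at hcon
    rw [Finset.sum_eq_zero (fun i _ => by rw [hcon i]; ring)] at hv
    exact one_ne_zero hv.symm
  obtain ⟨i0, hi0⟩ := hvz
  have hw0 : w i0 ≠ 0 := by
    intro hz
    apply hi0
    have h0 := h i0 i0
    rw [hz, mul_zero] at h0
    exact mul_self_eq_zero.mp h0
  have hsq := h i0 i0
  have hww : w i0 * w i0 ≠ 0 := mul_ne_zero hw0 hw0
  refine ⟨v i0 / w i0, ?_, ?_⟩
  · apply mul_self_eq_one_iff.mp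
    rw [div_mul_div_comm, hsq, div_self hww]
  · funext j
    have h2 := h i0 j
    have key : v j * (v i0 * w i0) = (v i0 / w i0 * w j) * (v i0 * w i0) := by
      have expand : (v i0 / w i0 * w j) * (v i0 * w i0) = (v i0 * v i0) * w j := by
        field_simp
      rw [expand]
      calc v j * (v i0 * w i0) = (v i0 * v j) * w i0 := by ring
        _ = (w i0 * w j) * w i0 := by rw [h2]
        _ = (w i0 * w i0) * w j := by ring
        _ = (v i0 * v i0) * w j := by rw [hsq]
    have hkey := mul_right_cancel₀ (mul_ne_zero hi0 hw0) key
    simpa using hkey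

end Tools2

section Main

variable {p K K' : ℕ}

lemma sum_dotProduct' {ι : Type*} (s : Finset ι) (f : ι → Fin p → ℝ) (w : Fin p → ℝ) :
    (∑ i ∈ s, f i) ⬝ᵥ w = ∑ i ∈ s, f i ⬝ᵥ w := by
  simp only [dotProduct, Finset.sum_apply, Finset.sum_mul]
  exact Finset.sum_comm

lemma quad_pert (v x y : Fin p → ℝ) (M : Matrix (Fin p) (Fin p) ℝ) (s : ℝ) :
    v ⬝ᵥ (M + s • symOuter x y).mulVec v
      = v ⬝ᵥ M.mulVec v + s * ((v ⬝ᵥ x) * (v ⬝ᵥ y)) := by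
  rw [quad_add, quad_smul, quad_symOuter]

lemma quad_pure (v x : Fin p → ℝ) (t : ℝ) :
    v ⬝ᵥ ((t • symOuter x x).mulVec v) = t * ((v ⬝ᵥ x) * (v ⬝ᵥ x)) := by
  rw [quad_smul, quad_symOuter]

lemma unmatchedLinear
    (g : Fin K → ℝ → ℝ) (g' : Fin K' → ℝ → ℝ)
    (γ : Fin K → Fin p → ℝ) (γ' : Fin K' → Fin p → ℝ)
    (hγu : ∀ k, γ k ⬝ᵥ γ k = 1) (hγ'u : ∀ l, γ' l ⬝ᵥ γ' l = 1)
    (hg0 : ∀ k, g k 0 = 0)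
    (x : Fin K → Fin p → ℝ) (hx : ∀ k j, γ k ⬝ᵥ x j = if k = j then 1 else 0)
    (x' : Fin K' → Fin p → ℝ) (hx' : ∀ l j, γ' l ⬝ᵥ x' j = if l = j then 1 else 0)
    (E : ∀ M : Matrix (Fin p) (Fin p) ℝ, M.IsSymm →
      ∑ k, g k (γ k ⬝ᵥ M.mulVec (γ k)) = ∑ l, g' l (γ' l ⬝ᵥ M.mulVec (γ' l)))
    (k0 : Fin K) (hgc : Continuous (g k0)) (hgnz : ∃ u, g k0 u ≠ 0)
    (hunm : ¬∃ (l : Fin K') (ε : ℝ), (ε = 1 ∨ ε = -1) ∧ γ k0 = ε • γ' l) :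
    ∃ a : ℝ, ∀ u, g k0 u = a * u := by
  classical
  by_cases hsp : γ k0 ∈ Submodule.span ℝ
      (Set.range (fun l : {l : Fin K' // γ' l ⬝ᵥ x k0 ≠ 0} => γ' (l : Fin K')))
  · -- Case: γ k0 in span; derive additivity of g k0
    rw [Submodule.mem_span_range_iff_exists_fun] at hsp
    obtain ⟨c, hc⟩ := hsp
    have hl1 : ∃ l1 : {l : Fin K' // γ' l ⬝ᵥ x k0 ≠ 0}, c l1 ≠ 0 := by
      by_contra hcon
      push_neg at hcon
      have hz : γ k0 = 0 := by
        rw [← hc, Finset.sum_eq_zero]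
        intro i _
        rw [hcon i, zero_smul]
      have h1 := hγu k0
      rw [hz, zero_dotProduct] at h1
      exact one_ne_zero h1.symm
    obtain ⟨l1, hl1⟩ := hl1
    have hβ : γ k0 ⬝ᵥ x' (l1 : Fin K') = c l1 := by
      rw [← hc, sum_dotProduct']
      rw [Finset.sum_eq_single l1]
      · rw [smul_dotProduct, hx' (l1 : Fin K') (l1 : Fin K')]
        simp
      · intro b _ hb
        rw [smul_dotProduct, hx' (b : Fin K') (l1 : Fin K')]
        have hbne : (b : Fin K') ≠ (l1 : Fin K') := fun he => hb (Subtype.ext he)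
        simp [hbne]
      · intro h; exact absurd (Finset.mem_univ l1) h
    have hβ0 : γ k0 ⬝ᵥ x' (l1 : Fin K') ≠ 0 := by rw [hβ]; exact hl1
    have hne : ∀ ε : ℝ, (ε = 1 ∨ ε = -1) → γ k0 ≠ ε • γ' (l1 : Fin K') := by
      intro ε hε hcon
      exact hunm ⟨(l1 : Fin K'), ε, hε, hcon⟩
    have key : ∀ a s : ℝ,
        g k0 (a + s * (γ k0 ⬝ᵥ x' (l1 : Fin K')))
          - g k0 a
        = g' (l1 : Fin K') (s * (γ' (l1 : Fin K') ⬝ᵥ x k0)) - g' (l1 : Fin K') 0 := by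
      intro a s
      obtain ⟨M, hMs, hMa, hMb⟩ := pairSurj (hγu k0) (hγ'u (l1 : Fin K')) hne a 0
      have hM1s : (M + s • symOuter (x' (l1 : Fin K')) (x k0)).IsSymm :=
        hMs.add ((symOuter_isSymm _ _).smul s)
      have e1 := E (M + s • symOuter (x' (l1 : Fin K')) (x k0)) hM1s
      have e2 := E M hMs
      have hcan := sum_cancel_two
        (fun k => g k (γ k ⬝ᵥ (M + s • symOuter (x' (l1 : Fin K')) (x k0)).mulVec (γ k)))
        (fun k => g k (γ k ⬝ᵥ M.mulVec (γ k)))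
        (fun l => g' l (γ' l ⬝ᵥ (M + s • symOuter (x' (l1 : Fin K')) (x k0)).mulVec (γ' l)))
        (fun l => g' l (γ' l ⬝ᵥ M.mulVec (γ' l)))
        k0 (l1 : Fin K')
        (fun k hk => by
          show g k _ = g k _
          rw [quad_pert, hx k k0, if_neg hk, mul_zero, mul_zero, add_zero])
        (fun l hl => by
          show g' l _ = g' l _
          rw [quad_pert, hx' l (l1 : Fin K'), if_neg hl, zero_mul, mul_zero, add_zero])
        e1 e2
      have hcan' : g k0 (γ k0 ⬝ᵥ (M + s • symOuter (x' (l1 : Fin K')) (x k0)).mulVec (γ k0))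
            - g k0 (γ k0 ⬝ᵥ M.mulVec (γ k0))
          = g' (l1 : Fin K')
              (γ' (l1 : Fin K') ⬝ᵥ (M + s • symOuter (x' (l1 : Fin K')) (x k0)).mulVec (γ' (l1 : Fin K')))
            - g' (l1 : Fin K') (γ' (l1 : Fin K') ⬝ᵥ M.mulVec (γ' (l1 : Fin K'))) := hcan
      rw [quad_pert, quad_pert, hMa, hMb, hx k0 k0, if_pos rfl,
        hx' (l1 : Fin K') (l1 : Fin K'), if_pos rfl] at hcan'
      rw [mul_one] at hcan'
      rw [one_mul, zero_add] at hcan'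
      exact hcan'
    have hadd : ∀ a u : ℝ, g k0 (a + u) = g k0 a + g k0 u := by
      intro a u
      have k1 := key a (u / (γ k0 ⬝ᵥ x' (l1 : Fin K')))
      have k2 := key 0 (u / (γ k0 ⬝ᵥ x' (l1 : Fin K')))
      rw [div_mul_cancel₀ u hβ0] at k1 k2
      rw [zero_add, hg0 k0] at k2
      linarith
    exact linear_of_additive (g k0) hgc hadd
  · -- Case: not in span; g k0 ≡ 0, contradiction
    exfalso
    obtain ⟨x1, hx10, hx1v⟩ := exists_orth _ (γ k0) hsp
    have hx1a : ∀ l : Fin K', γ' l ⬝ᵥ x k0 ≠ 0 → γ' l ⬝ᵥ x1 = 0 := by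
      intro l hl
      exact hx10 (γ' l) ⟨⟨l, hl⟩, rfl⟩
    have hzero : ∀ t s : ℝ, g k0 (t + s) = g k0 t := by
      intro t s
      have hM0s : (t • symOuter (γ k0) (γ k0)).IsSymm := (symOuter_isSymm _ _).smul t
      have hM1s : (t • symOuter (γ k0) (γ k0) + s • symOuter x1 (x k0)).IsSymm :=
        hM0s.add ((symOuter_isSymm _ _).smul s)
      have e1 := E _ hM1s
      have e2 := E _ hM0s
      have esum : ∑ k, g k (γ k ⬝ᵥ (t • symOuter (γ k0) (γ k0) + s • symOuter x1 (x k0)).mulVec (γ k))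
          = ∑ k, g k (γ k ⬝ᵥ (t • symOuter (γ k0) (γ k0)).mulVec (γ k)) := by
        rw [e1, e2]
        refine Finset.sum_congr rfl fun l _ => ?_
        rw [quad_pert]
        by_cases hl : γ' l ⬝ᵥ x k0 = 0
        · rw [hl, mul_zero, mul_zero, add_zero]
        · rw [hx1a l hl, zero_mul, mul_zero, add_zero]
      have hcan := sum_cancel_one
        (fun k => g k (γ k ⬝ᵥ (t • symOuter (γ k0) (γ k0) + s • symOuter x1 (x k0)).mulVec (γ k)))
        (fun k => g k (γ k ⬝ᵥ (t • symOuter (γ k0) (γ k0)).mulVec (γ k)))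
        k0
        (fun k hk => by
          show g k _ = g k _
          rw [quad_pert, hx k k0, if_neg hk, mul_zero, mul_zero, add_zero])
        esum
      have hcan' : g k0 (γ k0 ⬝ᵥ (t • symOuter (γ k0) (γ k0) + s • symOuter x1 (x k0)).mulVec (γ k0))
          = g k0 (γ k0 ⬝ᵥ (t • symOuter (γ k0) (γ k0)).mulVec (γ k0)) := hcan
      rw [quad_pert, quad_pure, hγu k0, hx1v, hx k0 k0, if_pos rfl] at hcan'
      simpa using hcan'
    obtain ⟨u, hu⟩ := hgnz
    apply hu
    have hfin := hzero 0 u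
    rw [zero_add, hg0 k0] at hfin
    exact hfin

end Main

section Main2

variable {p K K' n : ℕ}

lemma eq_of_smul_eq (v : Fin n → Fin p → ℝ) (x : Fin n → Fin p → ℝ)
    (hx : ∀ k j, v k ⬝ᵥ x j = if k = j then 1 else 0)
    {i j : Fin n} {c : ℝ} (h : v i = c • v j) : i = j := by
  by_contra hne
  have h1 : v i ⬝ᵥ x i = 1 := by rw [hx i i, if_pos rfl]
  rw [h, smul_dotProduct, hx j i, if_neg (fun he => hne he.symm)] at h1
  simp at h1

lemma quadMatch {γk γl : Fin p → ℝ} {ε : ℝ} (hε : ε = 1 ∨ ε = -1)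
    (h : γk = ε • γl) (M : Matrix (Fin p) (Fin p) ℝ) :
    γk ⬝ᵥ M.mulVec γk = γl ⬝ᵥ M.mulVec γl := by
  have hε2 : ε * ε = 1 := by rcases hε with h1 | h1 <;> rw [h1] <;> ring
  rw [h, smul_dotProduct, Matrix.mulVec_smul, dotProduct_smul]
  simp only [smul_eq_mul]
  rw [← mul_assoc, hε2, one_mul]

lemma smul_flip {γk γl : Fin p → ℝ} {ε : ℝ} (hε : ε = 1 ∨ ε = -1)
    (h : γk = ε • γl) : γl = ε • γk := by
  have hε2 : ε * ε = 1 := by rcases hε with h1 | h1 <;> rw [h1] <;> ring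
  rw [h, smul_smul, hε2, one_smul]

lemma funEq
    (g : Fin K → ℝ → ℝ) (g' : Fin K' → ℝ → ℝ)
    (γ : Fin K → Fin p → ℝ) (γ' : Fin K' → Fin p → ℝ)
    (hg0 : ∀ k, g k 0 = 0) (hg'0 : ∀ l, g' l 0 = 0)
    (x : Fin K → Fin p → ℝ) (hx : ∀ k j, γ k ⬝ᵥ x j = if k = j then 1 else 0)
    (x' : Fin K' → Fin p → ℝ) (hx' : ∀ l j, γ' l ⬝ᵥ x' j = if l = j then 1 else 0)
    (E : ∀ M : Matrix (Fin p) (Fin p) ℝ, M.IsSymm →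
      ∑ k, g k (γ k ⬝ᵥ M.mulVec (γ k)) = ∑ l, g' l (γ' l ⬝ᵥ M.mulVec (γ' l)))
    (k0 : Fin K) (l0 : Fin K') (ε : ℝ) (hε : ε = 1 ∨ ε = -1)
    (hγε : γ k0 = ε • γ' l0) : g k0 = g' l0 := by
  classical
  have hε2 : ε * ε = 1 := by rcases hε with h1 | h1 <;> rw [h1] <;> ring
  have hflip : γ' l0 = ε • γ k0 := smul_flip hε hγε
  funext u
  have hsym : ((u * ε) • symOuter (x k0) (x' l0)).IsSymm := (symOuter_isSymm _ _).smul _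
  have e := E _ hsym
  have hquad : ∀ v : Fin p → ℝ,
      v ⬝ᵥ ((u * ε) • symOuter (x k0) (x' l0)).mulVec v
        = (u * ε) * ((v ⬝ᵥ x k0) * (v ⬝ᵥ x' l0)) := fun v => by
    rw [quad_smul, quad_symOuter]
  have hL : ∑ k, g k (γ k ⬝ᵥ ((u * ε) • symOuter (x k0) (x' l0)).mulVec (γ k)) = g k0 u := by
    rw [Finset.sum_eq_single k0]
    · rw [hquad, hx k0 k0, if_pos rfl, one_mul]
      have : γ k0 ⬝ᵥ x' l0 = ε := by
        rw [hγε, smul_dotProduct, hx' l0 l0, if_pos rfl]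
        simp
      rw [this]
      congr 1
      rw [mul_assoc, mul_comm ε, ← mul_assoc, mul_assoc, hε2]  -- (u*ε)*ε = u
      ring
    · intro k _ hk
      rw [hquad, hx k k0, if_neg hk]
      simpa using hg0 k
    · intro h; exact absurd (Finset.mem_univ k0) h
  have hR : ∑ l, g' l (γ' l ⬝ᵥ ((u * ε) • symOuter (x k0) (x' l0)).mulVec (γ' l)) = g' l0 u := by
    rw [Finset.sum_eq_single l0]
    · rw [hquad, hx' l0 l0, if_pos rfl, mul_one]
      have : γ' l0 ⬝ᵥ x k0 = ε := by
        rw [hflip, smul_dotProduct, hx k0 k0, if_pos rfl]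
        simp
      rw [this]
      congr 1
      rw [mul_assoc, mul_comm ε, ← mul_assoc]  -- adjust
      rw [mul_assoc, hε2]
      ring
    · intro l _ hl
      rw [hquad, hx' l l0, if_neg hl]
      simpa using hg'0 l
    · intro h; exact absurd (Finset.mem_univ l0) h
  rw [hL, hR] at e
  exact e

end Main2

section Main3

variable {p K K' : ℕ}

lemma allMatched (hK'pos : 0 < K')
    (g : Fin K → ℝ → ℝ) (g' : Fin K' → ℝ → ℝ)
    (γ : Fin K → Fin p → ℝ) (γ' : Fin K' → Fin p → ℝ)
    (hγu : ∀ k, γ k ⬝ᵥ γ k = 1) (hγ'u : ∀ l, γ' l ⬝ᵥ γ' l = 1)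
    (hγu2 : ∀ k, ∑ i, γ k i ^ 2 = 1)
    (hgc : ∀ k, Continuous (g k)) (hg'c : ∀ l, Continuous (g' l))
    (hg0 : ∀ k, g k 0 = 0) (hg'0 : ∀ l, g' l 0 = 0)
    (hgnz : ∀ k, ∃ u, g k u ≠ 0) (hg'nz : ∀ l, ∃ u, g' l u ≠ 0)
    (hglin : ∀ k k' : Fin K, (∃ a : ℝ, ∀ u, g k u = a * u) →
      (∃ a : ℝ, ∀ u, g k' u = a * u) → k = k')
    (hg'lin : ∀ l l' : Fin K', (∃ a : ℝ, ∀ u, g' l u = a * u) →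
      (∃ a : ℝ, ∀ u, g' l' u = a * u) → l = l')
    (x : Fin K → Fin p → ℝ) (hx : ∀ k j, γ k ⬝ᵥ x j = if k = j then 1 else 0)
    (x' : Fin K' → Fin p → ℝ) (hx' : ∀ l j, γ' l ⬝ᵥ x' j = if l = j then 1 else 0)
    (E : ∀ M : Matrix (Fin p) (Fin p) ℝ, M.IsSymm →
      ∑ k, g k (γ k ⬝ᵥ M.mulVec (γ k)) = ∑ l, g' l (γ' l ⬝ᵥ M.mulVec (γ' l))) :
    ∀ k0, ∃ (l : Fin K') (ε : ℝ), (ε = 1 ∨ ε = -1) ∧ γ k0 = ε • γ' l := by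
  classical
  intro k0
  by_contra hunm
  have E' : ∀ M : Matrix (Fin p) (Fin p) ℝ, M.IsSymm →
      ∑ l, g' l (γ' l ⬝ᵥ M.mulVec (γ' l)) = ∑ k, g k (γ k ⬝ᵥ M.mulVec (γ k)) :=
    fun M hM => (E M hM).symm
  have hlin0 : ∃ a, ∀ u, g k0 u = a * u :=
    unmatchedLinear g g' γ γ' hγu hγ'u hg0 x hx x' hx' E k0 (hgc k0) (hgnz k0) hunm
  have hothers : ∀ k, ∃ (l : Fin K') (ε : ℝ), k ≠ k0 →
      ((ε = 1 ∨ ε = -1) ∧ γ k = ε • γ' l) := by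
    intro k
    by_cases hk : k = k0
    · exact ⟨⟨0, hK'pos⟩, 1, fun h => absurd hk h⟩
    · by_cases hm : ∃ (l : Fin K') (ε : ℝ), (ε = 1 ∨ ε = -1) ∧ γ k = ε • γ' l
      · obtain ⟨l, ε, hε, hg⟩ := hm
        exact ⟨l, ε, fun _ => ⟨hε, hg⟩⟩
      · exfalso
        have hlin2 : ∃ a, ∀ u, g k u = a * u :=
          unmatchedLinear g g' γ γ' hγu hγ'u hg0 x hx x' hx' E k (hgc k) (hgnz k) hm
        exact hk (hglin k k0 hlin2 hlin0)
  choose m mε hm using hothers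
  set T : Finset (Fin K') := (Finset.univ.erase k0).image m with hT
  -- reindexed sum over matched part
  have hreidx : ∀ M : Matrix (Fin p) (Fin p) ℝ, M.IsSymm →
      ∑ l ∈ T, g' l (γ' l ⬝ᵥ M.mulVec (γ' l))
        = ∑ k ∈ Finset.univ.erase k0, g k (γ k ⬝ᵥ M.mulVec (γ k)) := by
    intro M hM
    rw [hT, Finset.sum_image]
    · refine Finset.sum_congr rfl fun k hk => ?_
      have hk0 := Finset.ne_of_mem_erase hk
      obtain ⟨hε, hγk⟩ := hm k hk0
      rw [← funEq g g' γ γ' hg0 hg'0 x hx x' hx' E k (m k) (mε k) hε hγk,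
        quadMatch hε hγk]
    · intro k1 hk1 k2 hk2 hval
      obtain ⟨hε1, hγ1⟩ := hm k1 (Finset.ne_of_mem_erase hk1)
      obtain ⟨hε2, hγ2⟩ := hm k2 (Finset.ne_of_mem_erase hk2)
      rw [hval] at hγ1
      have h22 : mε k2 * mε k2 = 1 := by rcases hε2 with h | h <;> rw [h] <;> ring
      have h12 : γ k1 = (mε k1 * mε k2) • γ k2 := by
        rw [hγ1, hγ2, smul_smul, mul_assoc, h22, mul_one]
      exact eq_of_smul_eq γ x hx h12
  -- the residual identity
  have hres : ∀ M : Matrix (Fin p) (Fin p) ℝ, M.IsSymm →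
      g k0 (γ k0 ⬝ᵥ M.mulVec (γ k0)) = ∑ l ∈ Tᶜ, g' l (γ' l ⬝ᵥ M.mulVec (γ' l)) := by
    intro M hM
    have e := E M hM
    rw [← Finset.add_sum_erase Finset.univ _ (Finset.mem_univ k0)] at e
    rw [← Finset.sum_add_sum_compl T (fun l => g' l (γ' l ⬝ᵥ M.mulVec (γ' l)))] at e
    rw [hreidx M hM] at e
    linarith
  -- every l outside T is unmatched on the primed side
  have hTc : ∀ l ∈ Tᶜ, ¬∃ (k : Fin K) (ε : ℝ), (ε = 1 ∨ ε = -1) ∧ γ' l = ε • γ k := by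
    intro l hl hcon
    obtain ⟨k, ε, hε, hγ'l⟩ := hcon
    by_cases hk : k = k0
    · subst hk
      exact hunm ⟨l, ε, hε, smul_flip hε hγ'l⟩
    · obtain ⟨hεk, hγk⟩ := hm k hk
      have : γ' l = (ε * mε k) • γ' (m k) := by
        rw [hγ'l, hγk, smul_smul]
      have hlmk : l = m k := eq_of_smul_eq γ' x' hx' this
      rw [Finset.mem_compl] at hl
      exact hl (hlmk ▸ Finset.mem_image_of_mem m (Finset.mem_erase_of_ne_of_mem hk (Finset.mem_univ k)))
  have hTclin : ∀ l ∈ Tᶜ, ∃ a, ∀ u, g' l u = a * u := by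
    intro l hl
    exact unmatchedLinear g' g γ' γ hγ'u hγu hg'0 x' hx' x hx E' l (hg'c l) (hg'nz l) (hTc l hl)
  by_cases hne : Tᶜ.Nonempty
  · obtain ⟨l0, hl0⟩ := hne
    have hsingle : Tᶜ = {l0} := by
      apply Finset.eq_singleton_iff_unique_mem.mpr
      exact ⟨hl0, fun l hl => hg'lin l l0 (hTclin l hl) (hTclin l0 hl0)⟩
    obtain ⟨a, ha⟩ := hlin0
    obtain ⟨a', ha'⟩ := hTclin l0 hl0
    have ha0 : a ≠ 0 := by
      intro h
      obtain ⟨u, hu⟩ := hgnz k0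
      exact hu (by rw [ha u, h, zero_mul])
    have hq : ∀ M : Matrix (Fin p) (Fin p) ℝ, M.IsSymm →
        a * (γ k0 ⬝ᵥ M.mulVec (γ k0)) = a' * (γ' l0 ⬝ᵥ M.mulVec (γ' l0)) := by
      intro M hM
      have := hres M hM
      rw [hsingle, Finset.sum_singleton, ha, ha'] at this
      exact this
    have hent := entries_of_quad_eq hq
    have haa : a = a' := by
      have h1 : ∑ i, a * (γ k0 i * γ k0 i) = ∑ i, a' * (γ' l0 i * γ' l0 i) :=
        Finset.sum_congr rfl fun i _ => hent i i
      rw [← Finset.mul_sum, ← Finset.mul_sum] at h1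
      have h2 : ∑ i, γ k0 i * γ k0 i = 1 := hγu k0
      have h3 : ∑ i, γ' l0 i * γ' l0 i = 1 := hγ'u l0
      rw [h2, h3, mul_one, mul_one] at h1
      exact h1
    have houter : ∀ i j, γ k0 i * γ k0 j = γ' l0 i * γ' l0 j := by
      intro i j
      have := hent i j
      rw [haa] at this
      have ha'0 : a' ≠ 0 := haa ▸ ha0
      exact mul_left_cancel₀ ha'0 this
    obtain ⟨ε, hε, hγeq⟩ := eq_pm_of_outer_eq (hγu2 k0) houter
    exact hunm ⟨l0, ε, hε, hγeq⟩
  · rw [Finset.not_nonempty_iff_eq_empty] at hne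
    obtain ⟨u, hu⟩ := hgnz k0
    apply hu
    have := hres (u • symOuter (γ k0) (γ k0)) ((symOuter_isSymm _ _).smul u)
    rw [hne, Finset.sum_empty, quad_pure, hγu k0] at this
    rw [mul_one, mul_one] at this
    exact this

end Main3

/-- Identifiability of the additive index model with symmetric matrix predictors
(Theorem 1 of the paper). -/
theorem identifiability_sym
    {p K K' : ℕ} (hKpos : 0 < K) (hK'pos : 0 < K') (hKp : K < p) (hK'p : K' < p)
    (μ μ' : ℝ)
    (g : Fin K → ℝ → ℝ) (g' : Fin K' → ℝ → ℝ)
    (γ : Fin K → Fin p → ℝ) (γ' : Fin K' → Fin p → ℝ)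
    -- Condition 1 for (g, γ)
    (hgc : ∀ k, Continuous (g k))
    (hγu : ∀ k, ∑ i, γ k i ^ 2 = 1)
    (hg0 : ∀ k, g k 0 = 0)
    (hgnz : ∀ k, ∃ u, g k u ≠ 0)
    (hglin : ∀ k k' : Fin K, (∃ a : ℝ, ∀ u, g k u = a * u) →
      (∃ a : ℝ, ∀ u, g k' u = a * u) → k = k')
    (hΓ : (Matrix.of fun (i : Fin p) (k : Fin K) => γ k i).rank = K)
    (hΓ2 : (Matrix.of fun (i : Fin p) (k : Fin K) => γ k i ^ 2).rank = K)
    -- Condition 1 for (g', γ')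
    (hg'c : ∀ l, Continuous (g' l))
    (hγ'u : ∀ l, ∑ i, γ' l i ^ 2 = 1)
    (hg'0 : ∀ l, g' l 0 = 0)
    (hg'nz : ∀ l, ∃ u, g' l u ≠ 0)
    (hg'lin : ∀ l l' : Fin K', (∃ a : ℝ, ∀ u, g' l u = a * u) →
      (∃ a : ℝ, ∀ u, g' l' u = a * u) → l = l')
    (hΓ' : (Matrix.of fun (i : Fin p) (l : Fin K') => γ' l i).rank = K')
    (hΓ'2 : (Matrix.of fun (i : Fin p) (l : Fin K') => γ' l i ^ 2).rank = K')
    -- the two additive index representations agree on all symmetric matrices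
    (heq : ∀ M : Matrix (Fin p) (Fin p) ℝ, M.IsSymm →
      μ + ∑ k, g k (γ k ⬝ᵥ M.mulVec (γ k)) = μ' + ∑ l, g' l (γ' l ⬝ᵥ M.mulVec (γ' l))) :
    μ = μ' ∧ K = K' ∧
      ∃ π : Fin K ≃ Fin K', ∀ j : Fin K, ∃ ε : ℝ, (ε = 1 ∨ ε = -1) ∧
        γ j = ε • γ' (π j) ∧ g j = g' (π j) := by
  classical
  obtain ⟨x, hx⟩ := exists_dual_family γ hΓ
  obtain ⟨x', hx'⟩ := exists_dual_family γ' hΓ'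
  have hγd : ∀ k, γ k ⬝ᵥ γ k = 1 := by
    intro k
    have h1 : γ k ⬝ᵥ γ k = ∑ i, γ k i ^ 2 := by
      simp [dotProduct, pow_two]
    rw [h1, hγu k]
  have hγ'd : ∀ l, γ' l ⬝ᵥ γ' l = 1 := by
    intro l
    have h1 : γ' l ⬝ᵥ γ' l = ∑ i, γ' l i ^ 2 := by
      simp [dotProduct, pow_two]
    rw [h1, hγ'u l]
  have hμ : μ = μ' := by
    have h0 := heq 0 (by simp [Matrix.IsSymm])
    simpa [Matrix.mulVec_zero, dotProduct_zero, hg0, hg'0] using h0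
  have E : ∀ M : Matrix (Fin p) (Fin p) ℝ, M.IsSymm →
      ∑ k, g k (γ k ⬝ᵥ M.mulVec (γ k)) = ∑ l, g' l (γ' l ⬝ᵥ M.mulVec (γ' l)) := by
    intro M hM
    have h1 := heq M hM
    rw [hμ] at h1
    exact add_left_cancel h1
  have E' : ∀ M : Matrix (Fin p) (Fin p) ℝ, M.IsSymm →
      ∑ l, g' l (γ' l ⬝ᵥ M.mulVec (γ' l)) = ∑ k, g k (γ k ⬝ᵥ M.mulVec (γ k)) :=
    fun M hM => (E M hM).symm
  have hAM := allMatched hK'pos g g' γ γ' hγd hγ'd hγu hgc hg'c hg0 hg'0 hgnz hg'nz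
    hglin hg'lin x hx x' hx' E
  have hAM' := allMatched hKpos g' g γ' γ hγ'd hγd hγ'u hg'c hgc hg'0 hg0 hg'nz hgnz
    hg'lin hglin x' hx' x hx E'
  choose m mε hmε hmg using hAM
  choose m' m'ε hm'ε hm'g using hAM'
  have hminj : Function.Injective m := by
    intro k1 k2 hval
    have h22 : mε k2 * mε k2 = 1 := by rcases hmε k2 with h | h <;> rw [h] <;> ring
    have h12 : γ k1 = (mε k1 * mε k2) • γ k2 := by
      rw [hmg k1, hval, hmg k2, smul_smul, mul_assoc, h22, mul_one]
    exact eq_of_smul_eq γ x hx h12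
  have hm'inj : Function.Injective m' := by
    intro l1 l2 hval
    have h22 : m'ε l2 * m'ε l2 = 1 := by rcases hm'ε l2 with h | h <;> rw [h] <;> ring
    have h12 : γ' l1 = (m'ε l1 * m'ε l2) • γ' l2 := by
      rw [hm'g l1, hval, hm'g l2, smul_smul, mul_assoc, h22, mul_one]
    exact eq_of_smul_eq γ' x' hx' h12
  have hKK' : K = K' := by
    have h1 : K ≤ K' := by
      have := Fintype.card_le_of_injective m hminj
      simpa using this
    have h2 : K' ≤ K := by
      have := Fintype.card_le_of_injective m' hm'inj
      simpa using this
    omega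
  refine ⟨hμ, hKK', ?_⟩
  have hbij : Function.Bijective m :=
    (Fintype.bijective_iff_injective_and_card m).mpr ⟨hminj, by simp [hKK']⟩
  refine ⟨Equiv.ofBijective m hbij, fun j => ?_⟩
  refine ⟨mε j, hmε j, hmg j, ?_⟩
  exact funEq g g' γ γ' hg0 hg'0 x hx x' hx' E j (m j) (mε j) (hmε j) (hmg j)
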